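/- Let λ̄ > 0 and define G_0(α,β) as any measurable function on T' = {0 ≤ β ≤ α ≤ 2R, β ≤ 2R-α} with |G_0(α,β)| ≤ λ̄(α-β), and recursively G_k(α,β) = ∫_β^α ∫_0^β [μ(η,σ) + ησ/(η²-σ²)²] G_{k-1}(η,σ) dσ dη where |μ| ≤ λ̄. Then |G_1(α,β)| ≤ F_{1,0}(α,β) + F_{0,1}(α,β)/4, where F_{n,k}(α,β) = λ̄^{n+1}α^n β^n (α-β)(log((α+β)/(α-β)))^k/(n!(n+1)!k!). -/

import Mathlib

open intervalIntegral

/-- F_{n,k}(α,β) = λ̄^{n+1}α^nβ^n(α-β)(log((α+β)/(α-β)))^k/(n!(n+1)!k!). -/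
noncomputable def Fnk (lam : ℝ) (n k : ℕ) (α β : ℝ) : ℝ :=
  lam ^ (n + 1) * α ^ n * β ^ n * (α - β) * Real.log ((α + β) / (α - β)) ^ k /
    ((Nat.factorial n : ℝ) * (Nat.factorial (n + 1) : ℝ) * (Nat.factorial k : ℝ))

open MeasureTheory in
lemma logIntegrable {c : ℝ} (hc : 0 < c) : IntervalIntegrable Real.log volume 0 c := by
  have hg : IntervalIntegrable (fun x : ℝ => 2 * x ^ (-(1/2) : ℝ) + x) volume 0 c :=
    ((intervalIntegral.intervalIntegrable_rpow' (by norm_num)).const_mul 2).add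
      (continuous_id.intervalIntegrable 0 c)
  refine hg.mono_fun Real.measurable_log.aestronglyMeasurable ?_
  filter_upwards [MeasureTheory.ae_restrict_mem measurableSet_uIoc] with x hx
  rw [Set.uIoc_of_le hc.le] at hx
  obtain ⟨hx0, hxc⟩ := hx
  have hrp : (0:ℝ) < x ^ (-(1/2) : ℝ) := Real.rpow_pos_of_pos hx0 _
  have hnorm : ‖(2 * x ^ (-(1/2) : ℝ) + x)‖ = 2 * x ^ (-(1/2) : ℝ) + x := by
    rw [Real.norm_eq_abs, abs_of_pos (by positivity)]
  rw [Real.norm_eq_abs, hnorm]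
  rcases le_or_gt 1 x with h1 | h1
  · rw [abs_of_nonneg (Real.log_nonneg h1)]
    have := Real.log_le_sub_one_of_pos hx0
    nlinarith
  · rw [abs_of_nonpos (Real.log_nonpos hx0.le h1.le)]
    have hs : Real.log x = 2 * Real.log (Real.sqrt x) := by
      rw [Real.log_sqrt hx0.le]; ring
    have hsp : 0 < Real.sqrt x := Real.sqrt_pos.2 hx0
    have h2 : Real.log (Real.sqrt x)⁻¹ ≤ (Real.sqrt x)⁻¹ - 1 :=
      Real.log_le_sub_one_of_pos (by positivity)
    rw [Real.log_inv] at h2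
    have hinv : (Real.sqrt x)⁻¹ = x ^ (-(1/2) : ℝ) := by
      rw [Real.sqrt_eq_rpow, ← Real.rpow_neg_one, ← Real.rpow_mul hx0.le]
      norm_num
    nlinarith [hinv ▸ h2]

open MeasureTheory in
lemma bound_integrable (lam η β : ℝ) (hβ : 0 ≤ β) (hη : β < η) :
    IntervalIntegrable (fun σ => (lam + η * σ / ((η ^ 2 - σ ^ 2) ^ 2)) * (lam * (η - σ)))
      volume 0 β := by
  apply ContinuousOn.intervalIntegrable
  apply ContinuousOn.mul
  · apply continuousOn_const.add
    apply ContinuousOn.div (by fun_prop) (by fun_prop)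
    intro σ hσ
    rw [Set.uIcc_of_le hβ] at hσ
    obtain ⟨hσ0, hσβ⟩ := hσ
    have : 0 < η ^ 2 - σ ^ 2 := by nlinarith
    positivity
  · fun_prop

open MeasureTheory in
lemma inner_calc (lam η β : ℝ) (hβ : 0 ≤ β) (hη : β < η) :
    ∫ σ in (0:ℝ)..β, (lam + η * σ / ((η ^ 2 - σ ^ 2) ^ 2)) * (lam * (η - σ)) =
      lam ^ 2 * (η * β - β ^ 2 / 2) +
        lam * ((Real.log (η + β) - Real.log (η - β)) / 4 - β / (2 * (η + β))) := by
  have hη0 : 0 < η := lt_of_le_of_lt hβ hη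
  set B : ℝ → ℝ := fun σ => lam ^ 2 * (η * σ - σ ^ 2 / 2) +
      lam * ((Real.log (η + σ) - Real.log (η - σ)) / 4 + (η / 2) * (η + σ)⁻¹) with hBdef
  have key : ∀ σ ∈ Set.uIcc (0:ℝ) β,
      HasDerivAt B ((lam + η * σ / ((η ^ 2 - σ ^ 2) ^ 2)) * (lam * (η - σ))) σ := by
    intro σ hσ
    rw [Set.uIcc_of_le hβ] at hσ
    obtain ⟨hσ0, hσβ⟩ := hσ
    have hps : 0 < η + σ := by linarith
    have hms : 0 < η - σ := by linarith
    have h1 : HasDerivAt (fun σ : ℝ => η + σ) 1 σ := (hasDerivAt_id σ).const_add η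
    have h2 : HasDerivAt (fun σ : ℝ => η - σ) (-1) σ := (hasDerivAt_id σ).const_sub η
    have hlog1 : HasDerivAt (fun σ : ℝ => Real.log (η + σ)) (1 / (η + σ)) σ :=
      h1.log (ne_of_gt hps)
    have hlog2 : HasDerivAt (fun σ : ℝ => Real.log (η - σ)) ((-1) / (η - σ)) σ :=
      h2.log (ne_of_gt hms)
    have hinv : HasDerivAt (fun σ : ℝ => (η + σ)⁻¹) (-(1) / (η + σ) ^ 2) σ :=
      h1.inv (ne_of_gt hps)
    have hpoly : HasDerivAt (fun σ : ℝ => η * σ - σ ^ 2 / 2) (η - σ) σ := by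
      have := ((hasDerivAt_id σ).const_mul η).sub ((hasDerivAt_pow 2 σ).div_const 2)
      simpa [Pi.sub_def] using this.congr_deriv (by ring)
    have hB : HasDerivAt B (lam ^ 2 * (η - σ) +
        lam * ((1 / (η + σ) - (-1) / (η - σ)) / 4 + (η / 2) * (-(1) / (η + σ) ^ 2))) σ :=
      (hpoly.const_mul (lam ^ 2)).add
        ((((hlog1.sub hlog2).div_const 4).add (hinv.const_mul (η / 2))).const_mul lam)
    convert hB using 1
    have h3 : η ^ 2 - σ ^ 2 = (η + σ) * (η - σ) := by ring
    rw [h3]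
    field_simp
    ring
  rw [intervalIntegral.integral_eq_sub_of_hasDerivAt key (bound_integrable lam η β hβ hη)]
  rw [hBdef]
  simp only
  rw [add_zero]
  field_simp
  ring

open MeasureTheory in
lemma g_integrable (lam α β : ℝ) (hβ : 0 < β) (hβα : β < α) :
    IntervalIntegrable (fun η => lam ^ 2 * (η * β - β ^ 2 / 2) +
      lam * ((Real.log (η + β) - Real.log (η - β)) / 4 - β / (2 * (η + β))))
      volume β α := by
  have hli : IntervalIntegrable (fun η : ℝ => Real.log (η - β)) volume β α := by
    have := (logIntegrable (sub_pos.2 hβα)).comp_sub_right β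
    rw [zero_add, sub_add_cancel] at this
    exact this
  have hc : IntervalIntegrable (fun η : ℝ => lam ^ 2 * (η * β - β ^ 2 / 2) +
      lam * (Real.log (η + β) / 4 - β / (2 * (η + β)))) volume β α := by
    apply ContinuousOn.intervalIntegrable
    have hne : ∀ η ∈ Set.uIcc β α, η + β ≠ 0 := by
      intro η hη
      rw [Set.uIcc_of_le hβα.le] at hη
      exact ne_of_gt (by linarith [hη.1])
    apply ContinuousOn.add (by fun_prop)
    apply ContinuousOn.mul continuousOn_const
    apply ContinuousOn.sub
    · exact ((ContinuousOn.log (by fun_prop) hne).div_const 4)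
    · exact ContinuousOn.div continuousOn_const (by fun_prop)
        (fun η hη => by have := hne η hη; positivity)
  have := hc.add (hli.const_mul (-(lam/4)))
  convert this using 1
  funext η
  ring

open MeasureTheory in
lemma outer_calc (lam α β : ℝ) (hβ : 0 < β) (hβα : β < α) :
    ∫ η in β..α, (lam ^ 2 * (η * β - β ^ 2 / 2) +
        lam * ((Real.log (η + β) - Real.log (η - β)) / 4 - β / (2 * (η + β)))) =
      lam ^ 2 * α * β * (α - β) / 2 +
        lam * (α - β) * (Real.log (α + β) - Real.log (α - β)) / 4 := by
  set Φ : ℝ → ℝ := fun η => lam ^ 2 * (β * η ^ 2 / 2 - β ^ 2 * η / 2) +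
      (lam / 4) * ((η + β) * Real.log (η + β) - (η - β) * Real.log (η - β)) -
      (lam * β / 2) * Real.log (η + β) with hΦdef
  have hcont : ContinuousOn Φ (Set.Icc β α) := by
    apply ContinuousOn.sub
    apply ContinuousOn.add (by fun_prop)
    · apply ContinuousOn.mul continuousOn_const
      apply ContinuousOn.sub
      · apply ContinuousOn.mul (by fun_prop)
        apply ContinuousOn.log (by fun_prop)
        intro η hη; exact ne_of_gt (by linarith [hη.1])
      · exact (Real.continuous_mul_log.comp (continuous_id.sub continuous_const)).continuousOn
    · apply ContinuousOn.mul continuousOn_const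
      apply ContinuousOn.log (by fun_prop)
      intro η hη; exact ne_of_gt (by linarith [hη.1])
  have hderiv : ∀ η ∈ Set.Ioo β α, HasDerivAt Φ
      (lam ^ 2 * (η * β - β ^ 2 / 2) +
        lam * ((Real.log (η + β) - Real.log (η - β)) / 4 - β / (2 * (η + β)))) η := by
    intro η hη
    obtain ⟨hη1, hη2⟩ := hη
    have hps : 0 < η + β := by linarith
    have hms : 0 < η - β := by linarith
    have h1 : HasDerivAt (fun η : ℝ => η + β) 1 η := (hasDerivAt_id η).add_const β
    have h2 : HasDerivAt (fun η : ℝ => η - β) 1 η := (hasDerivAt_id η).sub_const β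
    have hl1 : HasDerivAt (fun η : ℝ => Real.log (η + β)) (1 / (η + β)) η :=
      h1.log (ne_of_gt hps)
    have hl2 : HasDerivAt (fun η : ℝ => Real.log (η - β)) (1 / (η - β)) η :=
      h2.log (ne_of_gt hms)
    have hm1 : HasDerivAt (fun η : ℝ => (η + β) * Real.log (η + β))
        (1 * Real.log (η + β) + (η + β) * (1 / (η + β))) η := h1.mul hl1
    have hm2 : HasDerivAt (fun η : ℝ => (η - β) * Real.log (η - β))
        (1 * Real.log (η - β) + (η - β) * (1 / (η - β))) η := h2.mul hl2
    have hpoly : HasDerivAt (fun η : ℝ => β * η ^ 2 / 2 - β ^ 2 * η / 2)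
        (β * (2 * η) / 2 - β ^ 2 * 1 / 2) η := by
      have := (((hasDerivAt_pow 2 η).const_mul β).div_const 2).sub
        (((hasDerivAt_id η).const_mul (β ^ 2)).div_const 2)
      simpa [Pi.sub_def] using this
    have hΦ : HasDerivAt Φ
        (lam ^ 2 * (β * (2 * η) / 2 - β ^ 2 * 1 / 2) +
          (lam / 4) * ((1 * Real.log (η + β) + (η + β) * (1 / (η + β))) -
            (1 * Real.log (η - β) + (η - β) * (1 / (η - β)))) -
          (lam * β / 2) * (1 / (η + β))) η :=
      ((hpoly.const_mul (lam ^ 2)).add ((hm1.sub hm2).const_mul (lam / 4))).sub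
        (hl1.const_mul (lam * β / 2))
    convert hΦ using 1
    field_simp
    ring
  rw [intervalIntegral.integral_eq_sub_of_hasDerivAt_of_le hβα.le hcont hderiv
    (g_integrable lam α β hβ hβα)]
  rw [hΦdef]
  simp only
  ring

/-- First successive approximation bound: if |G₀(α,β)| ≤ λ̄(α-β) on T' and
G₁(α,β) = ∫_β^α ∫_0^β [μ(η,σ) + ησ/(η²-σ²)²] G₀(η,σ) dσ dη with |μ| ≤ λ̄,
then |G₁(α,β)| ≤ F_{1,0}(α,β) + F_{0,1}(α,β)/4 on T'. -/
theorem first_successive_approximation_bound (R lam : ℝ) (hR : 0 < R) (hlam : 0 < lam)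
    (μ G0 G1 : ℝ → ℝ → ℝ)
    (hμm : Measurable (fun p : ℝ × ℝ => μ p.1 p.2))
    (hG0m : Measurable (fun p : ℝ × ℝ => G0 p.1 p.2))
    (hμ : ∀ η σ, 0 ≤ σ → σ ≤ η → η ≤ 2 * R → σ ≤ 2 * R - η → |μ η σ| ≤ lam)
    (hG0 : ∀ η σ, 0 ≤ σ → σ ≤ η → η ≤ 2 * R → σ ≤ 2 * R - η → |G0 η σ| ≤ lam * (η - σ))
    (hG1 : ∀ α β, G1 α β =
      ∫ η in β..α, ∫ σ in (0 : ℝ)..β,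
        (μ η σ + η * σ / ((η ^ 2 - σ ^ 2) ^ 2)) * G0 η σ) :
    ∀ α β, 0 ≤ β → β ≤ α → α ≤ 2 * R → β ≤ 2 * R - α →
      |G1 α β| ≤ Fnk lam 1 0 α β + Fnk lam 0 1 α β / 4 := by
  intro α β hβ0 hβα hα2R hβ2R
  rw [hG1]
  rcases eq_or_lt_of_le hβα with heq | hβα'
  · subst heq
    rw [intervalIntegral.integral_same]
    norm_num [Fnk]
  rcases eq_or_lt_of_le hβ0 with heq0 | hβ0'
  · subst heq0
    have hα0 : (0:ℝ) < α := hβα'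
    simp only [intervalIntegral.integral_same]
    rw [intervalIntegral.integral_zero]
    norm_num [Fnk, div_self (ne_of_gt hα0)]
  -- main case : 0 < β < α
  set g : ℝ → ℝ := fun η => lam ^ 2 * (η * β - β ^ 2 / 2) +
      lam * ((Real.log (η + β) - Real.log (η - β)) / 4 - β / (2 * (η + β))) with hgdef
  have hstepA : ∀ η ∈ Set.Ioc β α,
      ‖∫ σ in (0:ℝ)..β, (μ η σ + η * σ / ((η ^ 2 - σ ^ 2) ^ 2)) * G0 η σ‖ ≤ g η := by
    intro η hη
    obtain ⟨hηβ, hηα⟩ := hη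
    have h_ae : ∀ᵐ σ ∂(MeasureTheory.volume.restrict (Set.uIoc (0:ℝ) β)),
        ‖(μ η σ + η * σ / ((η ^ 2 - σ ^ 2) ^ 2)) * G0 η σ‖ ≤
          (lam + η * σ / ((η ^ 2 - σ ^ 2) ^ 2)) * (lam * (η - σ)) := by
      filter_upwards [MeasureTheory.ae_restrict_mem measurableSet_uIoc] with σ hσ
      rw [Set.uIoc_of_le hβ0] at hσ
      obtain ⟨hσ0, hσβ⟩ := hσ
      have hq : 0 ≤ η * σ / ((η ^ 2 - σ ^ 2) ^ 2) := by
        apply div_nonneg (by nlinarith) (by positivity)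
      have hμb := hμ η σ hσ0.le (by linarith) (by linarith) (by linarith)
      have hG0b := hG0 η σ hσ0.le (by linarith) (by linarith) (by linarith)
      rw [Real.norm_eq_abs, abs_mul]
      apply mul_le_mul _ hG0b (abs_nonneg _) (by positivity)
      calc |μ η σ + η * σ / ((η ^ 2 - σ ^ 2) ^ 2)|
          ≤ |μ η σ| + |η * σ / ((η ^ 2 - σ ^ 2) ^ 2)| := abs_add_le _ _
        _ ≤ lam + η * σ / ((η ^ 2 - σ ^ 2) ^ 2) := by
            rw [abs_of_nonneg hq]; exact add_le_add_left hμb _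
    have hle := intervalIntegral.norm_integral_le_abs_of_norm_le h_ae
      (bound_integrable lam η β hβ0 hηβ)
    have hnn : 0 ≤ ∫ σ in (0:ℝ)..β,
        (lam + η * σ / ((η ^ 2 - σ ^ 2) ^ 2)) * (lam * (η - σ)) := by
      apply intervalIntegral.integral_nonneg hβ0
      intro σ hσ
      obtain ⟨hσ0, hσβ⟩ := hσ
      have hq : 0 ≤ η * σ / ((η ^ 2 - σ ^ 2) ^ 2) := by
        apply div_nonneg (by nlinarith) (by positivity)
      have : 0 ≤ lam * (η - σ) := by nlinarith
      nlinarith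
    rw [abs_of_nonneg hnn, inner_calc lam η β hβ0 hηβ] at hle
    exact hle
  have h_ae' : ∀ᵐ η ∂(MeasureTheory.volume.restrict (Set.uIoc β α)),
      ‖∫ σ in (0:ℝ)..β, (μ η σ + η * σ / ((η ^ 2 - σ ^ 2) ^ 2)) * G0 η σ‖ ≤ g η := by
    filter_upwards [MeasureTheory.ae_restrict_mem measurableSet_uIoc] with η hη
    rw [Set.uIoc_of_le hβα] at hη
    exact hstepA η hη
  have hstepB := intervalIntegral.norm_integral_le_abs_of_norm_le h_ae'
    (g_integrable lam α β hβ0' hβα')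
  rw [hgdef] at hstepB
  rw [outer_calc lam α β hβ0' hβα'] at hstepB
  have hV : lam ^ 2 * α * β * (α - β) / 2 +
      lam * (α - β) * (Real.log (α + β) - Real.log (α - β)) / 4 =
      Fnk lam 1 0 α β + Fnk lam 0 1 α β / 4 := by
    have hps : (0:ℝ) < α + β := by linarith
    have hms : (0:ℝ) < α - β := by linarith
    rw [Fnk, Fnk, Real.log_div (ne_of_gt hps) (ne_of_gt hms)]
    norm_num [Nat.factorial]
  have hVnn : 0 ≤ lam ^ 2 * α * β * (α - β) / 2 +
      lam * (α - β) * (Real.log (α + β) - Real.log (α - β)) / 4 := by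
    have hps : (0:ℝ) < α - β := by linarith
    have hlog : Real.log (α - β) ≤ Real.log (α + β) :=
      Real.log_le_log hps (by linarith)
    have hα0 : (0:ℝ) < α := lt_trans hβ0' hβα'
    have h1 : 0 ≤ lam ^ 2 * α * β * (α - β) / 2 := by
      apply div_nonneg _ (by norm_num)
      exact mul_nonneg (mul_nonneg (mul_nonneg (sq_nonneg lam) hα0.le) hβ0) hps.le
    have h2 : 0 ≤ lam * (α - β) * (Real.log (α + β) - Real.log (α - β)) / 4 := by
      apply div_nonneg _ (by norm_num)
      exact mul_nonneg (mul_nonneg hlam.le hps.le) (by linarith)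
    linarith
  rw [abs_of_nonneg hVnn] at hstepB
  rw [← hV]
  exact hstepB
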